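/- Observation 1 (permutation of rules): Let R be a rule set and ρ ∈ R. Whenever, in a derivation in G3(R), the conclusion of an application of s(ρ) is a premise of an application of (∧R) or of (∃R), the two consecutive rule applications can be interchanged: there is a derivation of the same end-sequent from the same open premises in which the application of (∧R) (respectively (∃R)) occurs immediately above the application of s(ρ). -/

import Mathlib

/- ## Syntax: terms, atoms, first-order formulas -/

/-- Terms: constants `C` and variables `V` (both indexed by ℕ, disjoint by construction). -/
inductive Tm where
  | const : ℕ → Tm
  | var : ℕ → Tm
deriving DecidableEq

/-- An atom `p(t₁,…,tₙ)`.  Predicate `0` is reserved for the special unary predicate `⊤`;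
    predicates of the language `𝓛` are the predicates `p ≠ 0`. -/
structure Atom where
  pred : ℕ
  args : List Tm
deriving DecidableEq

/-- First-order formulas, generated from atoms by `¬`, `∧` and `∃x`. -/
inductive Fml where
  | atom : ℕ → List Tm → Fml
  | not : Fml → Fml
  | and : Fml → Fml → Fml
  | ex : ℕ → Fml → Fml
deriving DecidableEq

def Atom.toFml (a : Atom) : Fml := Fml.atom a.pred a.args

/-- Extension of a substitution on variables to all terms (constants are fixed). -/
def Tm.app (μ : ℕ → Tm) : Tm → Tm
  | Tm.const c => Tm.const c
  | Tm.var x => μ x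

def Atom.map (f : Tm → Tm) (a : Atom) : Atom := ⟨a.pred, a.args.map f⟩

def Atom.subst (μ : ℕ → Tm) (a : Atom) : Atom := a.map (Tm.app μ)

/-- `Tm.subst t x` substitutes the term `t` for the variable `x`. -/
def Tm.subst (t : Tm) (x : ℕ) : Tm → Tm
  | Tm.const c => Tm.const c
  | Tm.var y => if y = x then t else Tm.var y

/-- `Fml.subst t x φ` is `φ(t/x)`: substitute `t` for every free occurrence of `x` in `φ`. -/
def Fml.subst (t : Tm) (x : ℕ) : Fml → Fml
  | Fml.atom p ts => Fml.atom p (ts.map (Tm.subst t x))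
  | Fml.not φ => Fml.not (Fml.subst t x φ)
  | Fml.and φ ψ => Fml.and (Fml.subst t x φ) (Fml.subst t x ψ)
  | Fml.ex y φ => if y = x then Fml.ex y φ else Fml.ex y (Fml.subst t x φ)

/-- Free variables of a formula. -/
def Fml.fv : Fml → Set ℕ
  | Fml.atom _ ts => {x | Tm.var x ∈ ts}
  | Fml.not φ => φ.fv
  | Fml.and φ ψ => φ.fv ∪ ψ.fv
  | Fml.ex y φ => φ.fv \ {y}

/-- Free variables and constants occurring in a formula. -/
def Fml.tms : Fml → Set Tm
  | Fml.atom _ ts => {t | t ∈ ts}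
  | Fml.not φ => φ.tms
  | Fml.and φ ψ => φ.tms ∪ ψ.tms
  | Fml.ex y φ => φ.tms \ {Tm.var y}

/-- A formula of the language `𝓛`, i.e. not mentioning the special predicate `⊤`. -/
def Fml.noTop : Fml → Prop
  | Fml.atom p _ => p ≠ 0
  | Fml.not φ => φ.noTop
  | Fml.and φ ψ => φ.noTop ∧ ψ.noTop
  | Fml.ex _ φ => φ.noTop

def Atom.tms (a : Atom) : Set Tm := {t | t ∈ a.args}

/-- Terms occurring in an instance. -/
def itms (I : Set Atom) : Set Tm := ⋃ a ∈ I, a.tms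

/-- `T(Γ)`: free variables and constants occurring in a set of formulas. -/
def tmsOf (S : Set Fml) : Set Tm := ⋃ φ ∈ S, φ.tms

/-- The atom `⊤(c)`. -/
def topAtom (c : ℕ) : Atom := ⟨0, [Tm.const c]⟩

/-- `I^⊤ = I ∪ {⊤(c) | c ∈ C}`. -/
def mfy (I : Set Atom) : Set Atom := I ∪ Set.range topAtom

/-- An instance is an interpretation iff `I^⊤ = I`. -/
def IsInterp (I : Set Atom) : Prop := mfy I = I

/-- An assignment into a set of terms: maps each variable into `T` (constants are fixed via `Tm.app`). -/
def IsAsg (T : Set Tm) (μ : ℕ → Tm) : Prop := ∀ x : ℕ, μ x ∈ T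

/- ## Semantics -/

/-- Satisfaction `I,μ ⊨ φ`. -/
def Sat (I : Set Atom) : (ℕ → Tm) → Fml → Prop
  | μ, Fml.atom p ts => (⟨p, ts.map (Tm.app μ)⟩ : Atom) ∈ I
  | μ, Fml.not φ => ¬ Sat I μ φ
  | μ, Fml.and φ ψ => Sat I μ φ ∧ Sat I μ ψ
  | μ, Fml.ex x φ => ∃ t ∈ itms I, Sat I (Function.update μ x t) φ

/-- `I ⊨ φ`: satisfaction under every `I`-assignment. -/
def SatF (I : Set Atom) (φ : Fml) : Prop :=
  ∀ μ : ℕ → Tm, IsAsg (itms I) μ → Sat I μ φ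

/-- Satisfaction under some `I`-assignment (used for instances that need not be interpretations). -/
def SatI (I : Set Atom) (φ : Fml) : Prop :=
  ∃ μ : ℕ → Tm, IsAsg (itms I) μ ∧ Sat I μ φ

/- ## Existential rules -/

/-- An existential rule `ρ = ∀x⃗y⃗ (β(x⃗,y⃗) → ∃z⃗ α(y⃗,z⃗))`: `body` is `β`, `head` is `α`
    (conjunctions of atoms identified with finite sets of atoms), and `evars` is `z⃗`. -/
structure ERule where
  body : Finset Atom
  head : Finset Atom
  evars : Finset ℕ
  body_nonempty : body.Nonempty
  head_nonempty : head.Nonempty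
  body_noTop : ∀ a ∈ body, a.pred ≠ 0
  head_noTop : ∀ a ∈ head, a.pred ≠ 0
  body_evars : ∀ a ∈ body, ∀ z ∈ evars, Tm.var z ∉ a.args
  head_frontier : ∀ a ∈ head, ∀ x : ℕ, Tm.var x ∈ a.args → x ∉ evars →
    ∃ b ∈ body, Tm.var x ∈ b.args

/-- `I ⊨ ρ` for an existential rule `ρ` (satisfaction of its universal closure). -/
def SatRule (I : Set Atom) (ρ : ERule) : Prop :=
  ∀ μ : ℕ → Tm, IsAsg (itms I) μ → (∀ a ∈ ρ.body, Atom.subst μ a ∈ I) →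
    ∃ ν : ℕ → Tm, IsAsg (itms I) ν ∧ (∀ x : ℕ, x ∉ ρ.evars → ν x = μ x) ∧
      ∀ a ∈ ρ.head, Atom.subst ν a ∈ I

/-- A database: a finite set of ground atoms (over the predicates of `𝓛`). -/
def IsDatabase (D : Finset Atom) : Prop :=
  ∀ a ∈ D, a.pred ≠ 0 ∧ ∀ t ∈ a.args, ∃ c : ℕ, t = Tm.const c

/-- `I ⊨ D ∪ R`. -/
def Models (I : Set Atom) (D : Finset Atom) (R : Set ERule) : Prop :=
  (∀ a ∈ D, SatF I a.toFml) ∧ ∀ ρ ∈ R, SatRule I ρ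

/-- Conjunctions of atoms (over predicates of `𝓛`). -/
inductive ConjAtoms : Fml → Prop
  | atom (p : ℕ) (ts : List Tm) : p ≠ 0 → ConjAtoms (Fml.atom p ts)
  | and {φ ψ : Fml} : ConjAtoms φ → ConjAtoms ψ → ConjAtoms (Fml.and φ ψ)

/-- A Boolean conjunctive query `∃x⃗ q(x⃗)`. -/
inductive IsBCQ : Fml → Prop
  | base {φ : Fml} : ConjAtoms φ → IsBCQ φ
  | ex {φ : Fml} (x : ℕ) : IsBCQ φ → IsBCQ (Fml.ex x φ)

/-- `(D,R) ⊨ q`. -/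
def KBEntails (D : Finset Atom) (R : Set ERule) (q : Fml) : Prop :=
  ∀ I : Set Atom, IsInterp I → Models I D R → SatF I q

/- ## Sequent calculus G3(R) -/

/-- The instantiated body `β(t⃗,t⃗')` of a rule, as a finite set of formulas. -/
def bodyImg (ρ : ERule) (σ : ℕ → Tm) : Finset Fml :=
  ρ.body.image (fun a => (Atom.subst σ a).toFml)

/-- The instantiated head `α(t⃗',z⃗)` of a rule, as a finite set of formulas. -/
def headImg (ρ : ERule) (ν : ℕ → Tm) : Finset Fml :=
  ρ.head.image (fun a => (Atom.subst ν a).toFml)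

/-- A correct application of the sequent rule `s(ρ)` with premise `Γ' ⊢ Δ` and conclusion `Γ ⊢ Δ`:
    `σ` instantiates `x⃗,y⃗`, the variables `z⃗` are mapped by `ν` to fresh variables
    (not occurring in the conclusion), `Γ` contains the instantiated body, and `Γ'` additionally
    contains the instantiated head. -/
def ERApp (ρ : ERule) (σ ν : ℕ → Tm) (Γ' Γ Δ : Finset Fml) : Prop :=
  (∀ x : ℕ, x ∉ ρ.evars → ν x = σ x) ∧
  (∀ z ∈ ρ.evars, ∃ v : ℕ, ν z = Tm.var v ∧ (∀ χ ∈ Γ, v ∉ χ.fv) ∧ (∀ χ ∈ Δ, v ∉ χ.fv)) ∧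
  (∀ z ∈ ρ.evars, ∀ z' ∈ ρ.evars, ν z = ν z' → z = z') ∧
  bodyImg ρ σ ⊆ Γ ∧
  Γ' = Γ ∪ headImg ρ ν

def ERStepR (ρ : ERule) (Γ' Γ Δ : Finset Fml) : Prop :=
  ∃ σ ν : ℕ → Tm, ERApp ρ σ ν Γ' Γ Δ

def ERStep (R : Set ERule) (Γ' Γ Δ : Finset Fml) : Prop :=
  ∃ ρ ∈ R, ERStepR ρ Γ' Γ Δ

/-- Provability in the sequent calculus `G3(R)` (sequents are pairs of finite sets of formulas;
    an inhabitant corresponds to a proof, i.e. a finite derivation tree whose leaves are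
    instances of the initial rule `(id)`). -/
inductive G3P (R : Set ERule) : Finset Fml → Finset Fml → Prop
  | ax {Γ Δ : Finset Fml} (p : ℕ) (ts : List Tm) :
      Fml.atom p ts ∈ Γ → Fml.atom p ts ∈ Δ → G3P R Γ Δ
  | negL {Γ Δ : Finset Fml} (φ : Fml) :
      G3P R Γ (insert φ Δ) → G3P R (insert (Fml.not φ) Γ) Δ
  | negR {Γ Δ : Finset Fml} (φ : Fml) :
      G3P R (insert φ Γ) Δ → G3P R Γ (insert (Fml.not φ) Δ)
  | andL {Γ Δ : Finset Fml} (φ ψ : Fml) :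
      G3P R (insert φ (insert ψ Γ)) Δ → G3P R (insert (Fml.and φ ψ) Γ) Δ
  | andR {Γ Δ : Finset Fml} (φ ψ : Fml) :
      G3P R Γ (insert φ Δ) → G3P R Γ (insert ψ Δ) → G3P R Γ (insert (Fml.and φ ψ) Δ)
  | exL {Γ Δ : Finset Fml} (x y : ℕ) (φ : Fml) :
      (∀ χ ∈ Γ, y ∉ χ.fv) → (∀ χ ∈ Δ, y ∉ χ.fv) → y ∉ (Fml.ex x φ).fv →
      G3P R (insert (Fml.subst (Tm.var y) x φ) Γ) Δ → G3P R (insert (Fml.ex x φ) Γ) Δ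
  | exR {Γ Δ : Finset Fml} (x : ℕ) (φ : Fml) (t : Tm) :
      G3P R Γ (insert (Fml.ex x φ) (insert (Fml.subst t x φ) Δ)) →
      G3P R Γ (insert (Fml.ex x φ) Δ)
  | er {Γ' Γ Δ : Finset Fml} :
      ERStep R Γ' Γ Δ → G3P R Γ' Δ → G3P R Γ Δ

/-- `R`-validity of the formula interpretation `f(Γ ⊢ Δ) = ⋀Γ → ⋁Δ` of a sequent:
    it is satisfied by every interpretation that models `R` (under every assignment). -/
def SeqValid (R : Set ERule) (Γ Δ : Finset Fml) : Prop :=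
  ∀ I : Set Atom, IsInterp I → (∀ ρ ∈ R, SatRule I ρ) →
    ∀ μ : ℕ → Tm, IsAsg (itms I) μ → (∀ φ ∈ Γ, Sat I μ φ) → ∃ ψ ∈ Δ, Sat I μ ψ

/- ## Triggers and the chase -/

/-- `τ = (ρ,μ)` is a trigger in `I`. -/
def IsTrigger (I : Set Atom) (ρ : ERule) (μ : ℕ → Tm) : Prop :=
  IsAsg (itms I) μ ∧ ∀ a ∈ ρ.body, Atom.subst μ a ∈ I

/-- `ν` extends `μ` by mapping the existential variables `z⃗` injectively to fresh variables
    not occurring in `I`. -/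
def FreshExt (I : Set Atom) (ρ : ERule) (μ ν : ℕ → Tm) : Prop :=
  (∀ x : ℕ, x ∉ ρ.evars → ν x = μ x) ∧
  (∀ z ∈ ρ.evars, ∃ v : ℕ, ν z = Tm.var v ∧ Tm.var v ∉ itms I) ∧
  (∀ z ∈ ρ.evars, ∀ z' ∈ ρ.evars, ν z = ν z' → z = z')

/-- `I' = τ(I) = I ∪ α(μ(y⃗),z⃗)` is an application of the trigger `τ = (ρ,μ)`
    (with fresh variables chosen via `ν`). -/
def TriggerApp (I : Set Atom) (ρ : ERule) (μ ν : ℕ → Tm) (I' : Set Atom) : Prop :=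
  FreshExt I ρ μ ν ∧ I' = I ∪ (Atom.subst ν) '' (↑ρ.head : Set Atom)

/-- One step of a chase derivation using a rule from `R`. -/
def ChaseStep (R : Set ERule) (I I' : Set Atom) : Prop :=
  ∃ ρ ∈ R, ∃ μ ν : ℕ → Tm, IsTrigger I ρ μ ∧ TriggerApp I ρ μ ν I'

/-- The one-step chase `Ch₁(I,R) = ⋃_{τ trigger in I} τ(I)`: every trigger of `I` is applied,
    with fresh variables chosen so that distinct applications introduce distinct fresh
    variables (applications sharing a fresh variable produce the same head instantiation). -/
def OneStepChase (R : Set ERule) (I J : Set Atom) : Prop :=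
  ∃ T : Set (ERule × (ℕ → Tm) × (ℕ → Tm)),
    (∀ p ∈ T, p.1 ∈ R ∧ IsTrigger I p.1 p.2.1 ∧ FreshExt I p.1 p.2.1 p.2.2) ∧
    (∀ ρ ∈ R, ∀ μ : ℕ → Tm, IsTrigger I ρ μ → ∃ ν : ℕ → Tm, (ρ, μ, ν) ∈ T) ∧
    (∀ p ∈ T, ∀ p' ∈ T,
      (∃ z ∈ p.1.evars, ∃ z' ∈ p'.1.evars, p.2.2 z = p'.2.2 z') →
      (Atom.subst p.2.2) '' (↑p.1.head : Set Atom) =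
        (Atom.subst p'.2.2) '' (↑p'.1.head : Set Atom)) ∧
    J = I ∪ ⋃ p ∈ T, (Atom.subst p.2.2) '' (↑p.1.head : Set Atom)

/-- `K n = Ch_n(D,R)`: the breadth-first chase sequence starting from the database `D`;
    `Ch_∞(D,R) = mfy (⋃ n, K n)`. -/
def ChaseSeq (R : Set ERule) (D : Finset Atom) (K : ℕ → Set Atom) : Prop :=
  K 0 = (↑D : Set Atom) ∧ ∀ n : ℕ, OneStepChase R (K n) (K (n + 1))

/- ## Homomorphisms -/

/-- A homomorphism from instance `I` to instance `J`. -/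
def IsHom (I J : Set Atom) (h : Tm → Tm) : Prop :=
  (∀ c : ℕ, h (Tm.const c) = Tm.const c) ∧ ∀ a ∈ I, Atom.map h a ∈ J

/- ## Proof search -/

/-- A bottom-up application of `(∧R)` (passing to one premise): conclusion `Γ ⊢ Δ`,
    premise `Γ' ⊢ Δ'`. -/
def AndRStep (Γ Δ Γ' Δ' : Finset Fml) : Prop :=
  Γ' = Γ ∧ ∃ φ ψ : Fml, Fml.and φ ψ ∈ Δ ∧ (Δ' = insert φ Δ ∨ Δ' = insert ψ Δ)

/-- A bottom-up application of `(∃R)`: conclusion `Γ ⊢ Δ`, premise `Γ' ⊢ Δ'`. -/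
def ExRStep (Γ Δ Γ' Δ' : Finset Fml) : Prop :=
  Γ' = Γ ∧ ∃ (x : ℕ) (φ : Fml) (t : Tm), Fml.ex x φ ∈ Δ ∧ Δ' = insert (Fml.subst t x φ) Δ

/-- The atoms occurring as elements of a set of formulas. -/
def atomsOf (S : Set Fml) : Set Atom := {a : Atom | a.toFml ∈ S}

/-- A failed fair proof-search branch for the input sequent `D ⊢ ∃x⃗ q(x⃗)`:
    an infinite sequence of sequents, each obtained from the previous by a bottom-up application
    of `(∧R)`, `(∃R)` or `s(ρ)` with `ρ ∈ R`, on which no sequent is an instance of `(id)` and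
    whose limit satisfies the saturation conditions. -/
structure FailedBranch (R : Set ERule) (D : Finset Atom) (q : Fml) where
  Γ : ℕ → Finset Fml
  Δ : ℕ → Finset Fml
  init_left : Γ 0 = D.image Atom.toFml
  init_right : Δ 0 = {q}
  step : ∀ i : ℕ,
    AndRStep (Γ i) (Δ i) (Γ (i + 1)) (Δ (i + 1)) ∨
    ExRStep (Γ i) (Δ i) (Γ (i + 1)) (Δ (i + 1)) ∨
    (Δ (i + 1) = Δ i ∧ ERStep R (Γ (i + 1)) (Γ i) (Δ i))
  noax : ∀ i : ℕ, ∀ (p : ℕ) (ts : List Tm), Fml.atom p ts ∈ Γ i → Fml.atom p ts ∉ Δ i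
  sat_and : ∀ φ ψ : Fml, Fml.and φ ψ ∈ (⋃ i, (↑(Δ i) : Set Fml)) →
    φ ∈ (⋃ i, (↑(Δ i) : Set Fml)) ∨ ψ ∈ (⋃ i, (↑(Δ i) : Set Fml))
  sat_ex : ∀ (x : ℕ) (φ : Fml), Fml.ex x φ ∈ (⋃ i, (↑(Δ i) : Set Fml)) →
    ∀ t ∈ tmsOf (⋃ i, (↑(Γ i) : Set Fml)), Fml.subst t x φ ∈ (⋃ i, (↑(Δ i) : Set Fml))
  sat_er : ∀ ρ ∈ R, ∀ μ : ℕ → Tm, IsAsg (tmsOf (⋃ i, (↑(Γ i) : Set Fml))) μ →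
    (∀ a ∈ ρ.body, (Atom.subst μ a).toFml ∈ (⋃ i, (↑(Γ i) : Set Fml))) →
    ∃ ν : ℕ → Tm, (∀ x : ℕ, x ∉ ρ.evars → ν x = μ x) ∧
      (∀ z ∈ ρ.evars, ν z ∈ tmsOf (⋃ i, (↑(Γ i) : Set Fml))) ∧
      ∀ a ∈ ρ.head, (Atom.subst ν a).toFml ∈ (⋃ i, (↑(Γ i) : Set Fml))
section Aux

variable {R : Set ERule}

/-- Free variables of an atom-formula. -/
lemma fv_atom (p : ℕ) (ts : List Tm) : (Fml.atom p ts).fv = {x | Tm.var x ∈ ts} := rfl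

lemma fv_toFml (a : Atom) : a.toFml.fv = {x | Tm.var x ∈ a.args} := rfl

lemma fv_finite (φ : Fml) : φ.fv.Finite := by
  induction φ with
  | atom p ts =>
      have : (Fml.atom p ts).fv ⊆ (fun x => Tm.var x) ⁻¹' {t | t ∈ ts} := fun x hx => hx
      exact Set.Finite.subset (Set.Finite.preimage
        (Set.injOn_of_injective (fun a b h => by cases h; rfl))
        (ts.finite_toSet)) this
  | not φ ih => exact ih
  | and φ ψ ih1 ih2 => exact ih1.union ih2
  | ex y φ ih => exact ih.diff

/-- A variant of `G3P` in which all eigenvariables and fresh variables of the derivation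
    belong to a fixed finite set `V`. -/
inductive G3B (R : Set ERule) (V : Finset ℕ) : Finset Fml → Finset Fml → Prop
  | ax {Γ Δ : Finset Fml} (p : ℕ) (ts : List Tm) :
      Fml.atom p ts ∈ Γ → Fml.atom p ts ∈ Δ → G3B R V Γ Δ
  | negL {Γ Δ : Finset Fml} (φ : Fml) :
      G3B R V Γ (insert φ Δ) → G3B R V (insert (Fml.not φ) Γ) Δ
  | negR {Γ Δ : Finset Fml} (φ : Fml) :
      G3B R V (insert φ Γ) Δ → G3B R V Γ (insert (Fml.not φ) Δ)
  | andL {Γ Δ : Finset Fml} (φ ψ : Fml) :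
      G3B R V (insert φ (insert ψ Γ)) Δ → G3B R V (insert (Fml.and φ ψ) Γ) Δ
  | andR {Γ Δ : Finset Fml} (φ ψ : Fml) :
      G3B R V Γ (insert φ Δ) → G3B R V Γ (insert ψ Δ) → G3B R V Γ (insert (Fml.and φ ψ) Δ)
  | exL {Γ Δ : Finset Fml} (x y : ℕ) (φ : Fml) :
      y ∈ V → (∀ χ ∈ Γ, y ∉ χ.fv) → (∀ χ ∈ Δ, y ∉ χ.fv) → y ∉ (Fml.ex x φ).fv →
      G3B R V (insert (Fml.subst (Tm.var y) x φ) Γ) Δ → G3B R V (insert (Fml.ex x φ) Γ) Δ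
  | exR {Γ Δ : Finset Fml} (x : ℕ) (φ : Fml) (t : Tm) :
      G3B R V Γ (insert (Fml.ex x φ) (insert (Fml.subst t x φ) Δ)) →
      G3B R V Γ (insert (Fml.ex x φ) Δ)
  | er {Γ' Γ Δ : Finset Fml} (ρ : ERule) (σ ν : ℕ → Tm) :
      ρ ∈ R → ERApp ρ σ ν Γ' Γ Δ →
      (∀ z ∈ ρ.evars, ∀ v : ℕ, ν z = Tm.var v → v ∈ V) →
      G3B R V Γ' Δ → G3B R V Γ Δ

lemma G3B.mono {V V' : Finset ℕ} {Γ Δ : Finset Fml} (hVV : V ⊆ V')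
    (h : G3B R V Γ Δ) : G3B R V' Γ Δ := by
  induction h with
  | ax p ts h1 h2 => exact .ax p ts h1 h2
  | negL φ _ ih => exact .negL φ ih
  | negR φ _ ih => exact .negR φ ih
  | andL φ ψ _ ih => exact .andL φ ψ ih
  | andR φ ψ _ _ ih1 ih2 => exact .andR φ ψ ih1 ih2
  | exL x y φ hy h1 h2 h3 _ ih => exact .exL x y φ (hVV hy) h1 h2 h3 ih
  | exR x φ t _ ih => exact .exR x φ t ih
  | er ρ σ ν hρ happ hv _ ih =>
      exact .er ρ σ ν hρ happ (fun z hz v hvz => hVV (hv z hz v hvz)) ih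

/-- Extract the variable of a term (garbage on constants). -/
def tvar : Tm → ℕ
  | Tm.const _ => 0
  | Tm.var v => v

lemma G3P.toB {Γ Δ : Finset Fml} (h : G3P R Γ Δ) : ∃ V : Finset ℕ, G3B R V Γ Δ := by
  induction h with
  | ax p ts h1 h2 => exact ⟨∅, .ax p ts h1 h2⟩
  | negL φ _ ih => obtain ⟨V, hV⟩ := ih; exact ⟨V, .negL φ hV⟩
  | negR φ _ ih => obtain ⟨V, hV⟩ := ih; exact ⟨V, .negR φ hV⟩
  | andL φ ψ _ ih => obtain ⟨V, hV⟩ := ih; exact ⟨V, .andL φ ψ hV⟩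
  | andR φ ψ _ _ ih1 ih2 =>
      obtain ⟨V1, h1⟩ := ih1; obtain ⟨V2, h2⟩ := ih2
      exact ⟨V1 ∪ V2, .andR φ ψ (h1.mono Finset.subset_union_left)
        (h2.mono Finset.subset_union_right)⟩
  | exL x y φ h1 h2 h3 _ ih =>
      obtain ⟨V, hV⟩ := ih
      exact ⟨insert y V, .exL x y φ (Finset.mem_insert_self y V) h1 h2 h3
        (hV.mono (Finset.subset_insert y V))⟩
  | exR x φ t _ ih => obtain ⟨V, hV⟩ := ih; exact ⟨V, .exR x φ t hV⟩
  | er hstep _ ih =>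
      obtain ⟨V, hV⟩ := ih
      obtain ⟨ρ, hρ, σ, ν, happ⟩ := hstep
      refine ⟨V ∪ ρ.evars.image (fun z => tvar (ν z)),
        .er ρ σ ν hρ happ (fun z hz v hvz => ?_)
          (hV.mono Finset.subset_union_left)⟩
      refine Finset.mem_union_right _ (Finset.mem_image.2 ⟨z, hz, ?_⟩)
      rw [hvz]; rfl

lemma G3B.toP {V : Finset ℕ} {Γ Δ : Finset Fml} (h : G3B R V Γ Δ) : G3P R Γ Δ := by
  induction h with
  | ax p ts h1 h2 => exact .ax p ts h1 h2
  | negL φ _ ih => exact .negL φ ih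
  | negR φ _ ih => exact .negR φ ih
  | andL φ ψ _ ih => exact .andL φ ψ ih
  | andR φ ψ _ _ ih1 ih2 => exact .andR φ ψ ih1 ih2
  | exL x y φ _ h1 h2 h3 _ ih => exact .exL x y φ h1 h2 h3 ih
  | exR x φ t _ ih => exact .exR x φ t ih
  | er ρ σ ν hρ happ _ _ ih => exact .er ⟨ρ, hρ, σ, ν, happ⟩ ih

/-- Weakening on the left by a set `W` of formulas each of whose free variables is either
    "protected" (in `A`, hence occurring in an atom of `Γ` that persists upwards) or
    outside the bound `V` of the derivation. -/
lemma G3B.weak {V : Finset ℕ} {Γ Δ : Finset Fml} (W : Finset Fml) (A : Set ℕ)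
    (hW : ∀ χ ∈ W, ∀ v ∈ Fml.fv χ, v ∈ A ∨ v ∉ V)
    (h : G3B R V Γ Δ) :
    (∀ v ∈ A, ∃ p ts, Fml.atom p ts ∈ Γ ∧ Tm.var v ∈ ts) → G3B R V (Γ ∪ W) Δ := by
  induction h with
  | ax p ts h1 h2 => exact fun _ => .ax p ts (Finset.mem_union_left _ h1) h2
  | @negL Γ Δ φ _ ih =>
      intro hQ
      have hQ' : ∀ v ∈ A, ∃ p ts, Fml.atom p ts ∈ Γ ∧ Tm.var v ∈ ts := by
        intro v hv
        obtain ⟨p, ts, hmem, hts⟩ := hQ v hv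
        rcases Finset.mem_insert.1 hmem with h | h
        · exact absurd h (by simp)
        · exact ⟨p, ts, h, hts⟩
      rw [Finset.insert_union]
      exact .negL φ (ih hQ')
  | @negR Γ Δ φ _ ih =>
      intro hQ
      have hQ' : ∀ v ∈ A, ∃ p ts, Fml.atom p ts ∈ insert φ Γ ∧ Tm.var v ∈ ts := by
        intro v hv
        obtain ⟨p, ts, hmem, hts⟩ := hQ v hv
        exact ⟨p, ts, Finset.mem_insert_of_mem hmem, hts⟩
      have := ih hQ'
      rw [Finset.insert_union] at this
      exact .negR φ this
  | @andL Γ Δ φ ψ _ ih =>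
      intro hQ
      have hQ' : ∀ v ∈ A, ∃ p ts, Fml.atom p ts ∈ insert φ (insert ψ Γ) ∧ Tm.var v ∈ ts := by
        intro v hv
        obtain ⟨p, ts, hmem, hts⟩ := hQ v hv
        rcases Finset.mem_insert.1 hmem with h | h
        · exact absurd h (by simp)
        · exact ⟨p, ts, Finset.mem_insert_of_mem (Finset.mem_insert_of_mem h), hts⟩
      have := ih hQ'
      rw [Finset.insert_union, Finset.insert_union] at this
      rw [Finset.insert_union]
      exact .andL φ ψ this
  | andR φ ψ _ _ ih1 ih2 => exact fun hQ => .andR φ ψ (ih1 hQ) (ih2 hQ)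
  | @exL Γ Δ x y φ hy h1 h2 h3 _ ih =>
      intro hQ
      have hQ0 : ∀ v ∈ A, ∃ p ts, Fml.atom p ts ∈ Γ ∧ Tm.var v ∈ ts := by
        intro v hv
        obtain ⟨p, ts, hmem, hts⟩ := hQ v hv
        rcases Finset.mem_insert.1 hmem with h | h
        · exact absurd h (by simp)
        · exact ⟨p, ts, h, hts⟩
      have hQ' : ∀ v ∈ A, ∃ p ts,
          Fml.atom p ts ∈ insert (Fml.subst (Tm.var y) x φ) Γ ∧ Tm.var v ∈ ts := by
        intro v hv
        obtain ⟨p, ts, hmem, hts⟩ := hQ0 v hv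
        exact ⟨p, ts, Finset.mem_insert_of_mem hmem, hts⟩
      have hprem := ih hQ'
      rw [Finset.insert_union] at hprem
      rw [Finset.insert_union]
      refine .exL x y φ hy (fun χ hχ => ?_) h2 h3 hprem
      rcases Finset.mem_union.1 hχ with h | h
      · exact h1 χ h
      · intro hfv
        rcases hW χ h y hfv with hA | hVn
        · obtain ⟨p, ts, hmem, hts⟩ := hQ0 y hA
          exact h1 (Fml.atom p ts) hmem hts
        · exact hVn hy
  | exR x φ t _ ih => exact fun hQ => .exR x φ t (ih hQ)
  | @er Γ' Γ Δ ρ σ ν hρ happ hv _ ih =>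
      intro hQ
      obtain ⟨e1, e2, e3, e4, e5⟩ := happ
      have hQ' : ∀ v ∈ A, ∃ p ts, Fml.atom p ts ∈ Γ' ∧ Tm.var v ∈ ts := by
        intro v hv
        obtain ⟨p, ts, hmem, hts⟩ := hQ v hv
        exact ⟨p, ts, by rw [e5]; exact Finset.mem_union_left _ hmem, hts⟩
      refine .er ρ σ ν hρ ⟨e1, ?_, e3, e4.trans Finset.subset_union_left, ?_⟩ hv (ih hQ')
      · intro z hz
        obtain ⟨v, hvz, hG, hD⟩ := e2 z hz
        refine ⟨v, hvz, fun χ hχ => ?_, hD⟩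
        rcases Finset.mem_union.1 hχ with h | h
        · exact hG χ h
        · intro hfv
          rcases hW χ h v hfv with hA | hVn
          · obtain ⟨p, ts, hmem, hts⟩ := hQ v hA
            exact hG (Fml.atom p ts) hmem hts
          · exact hVn (hv z hz v hvz)
      · rw [e5, Finset.union_right_comm]

end Aux

/-- Observation 1: applications of `(∧R)` and of `(∃R)` permute above `s(ρ)`:
    whenever the conclusion of an `s(ρ)` application is a premise of an `(∧R)` (resp. `(∃R)`)
    application, the same end-sequent is derivable with the `s(ρ)` application at the bottom and
    the `(∧R)` (resp. `(∃R)`) application immediately above it. -/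
theorem permute_above_er (R : Set ERule) (hR : R.Finite) (ρ : ERule) (hρ : ρ ∈ R) :
    (∀ (Γ' Γ Δ : Finset Fml) (φ ψ : Fml),
      ERStepR ρ Γ' Γ (insert φ Δ) →
      G3P R Γ' (insert φ Δ) → G3P R Γ (insert ψ Δ) →
      ∃ Γ'' : Finset Fml, ERStepR ρ Γ'' Γ (insert (Fml.and φ ψ) Δ) ∧
        G3P R Γ'' (insert φ Δ) ∧ G3P R Γ'' (insert ψ Δ)) ∧
    (∀ (Γ' Γ Δ : Finset Fml) (x : ℕ) (φ : Fml) (t : Tm),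
      ERStepR ρ Γ' Γ (insert (Fml.ex x φ) (insert (Fml.subst t x φ) Δ)) →
      G3P R Γ' (insert (Fml.ex x φ) (insert (Fml.subst t x φ) Δ)) →
      ∃ Γ'' : Finset Fml, ERStepR ρ Γ'' Γ (insert (Fml.ex x φ) Δ) ∧
        G3P R Γ'' (insert (Fml.ex x φ) (insert (Fml.subst t x φ) Δ))) := by
  constructor
  · intro Γ' Γ Δ φ ψ hER d1 d2
    obtain ⟨σ, ν, h1, h2, h3, h4, h5⟩ := hER
    obtain ⟨V1, b1⟩ := d1.toB
    obtain ⟨V2, b2⟩ := d2.toB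
    set V : Finset ℕ := V1 ∪ V2 with hVdef
    set S : Set ℕ := ↑V ∪ ((⋃ χ ∈ (↑(Γ ∪ Δ) : Set Fml), Fml.fv χ) ∪ (Fml.fv φ ∪ Fml.fv ψ))
        ∪ {v | ∃ z ∈ ρ.evars, ν z = Tm.var v} with hSdef
    have hSfin : S.Finite := by
      refine (Set.Finite.union (Set.Finite.union V.finite_toSet
        (Set.Finite.union ((Γ ∪ Δ).finite_toSet.biUnion fun χ _ => fv_finite χ)
          ((fv_finite φ).union (fv_finite ψ)))) ?_)
      refine Set.Finite.subset ((ρ.evars.finite_toSet.image fun z => tvar (ν z))) ?_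
      rintro v ⟨z, hz, hvz⟩
      exact ⟨z, hz, by show tvar (ν z) = v; rw [hvz]; rfl⟩
    obtain ⟨N, hN⟩ := hSfin.bddAbove
    have hfresh : ∀ (k : ℕ), N + 1 + k ∉ S := fun k hk => by
      have := hN hk; omega
    have hSV : (↑V : Set ℕ) ⊆ S := fun v hv => Or.inl (Or.inl hv)
    have hSΓ : ∀ χ ∈ Γ, ∀ v ∈ Fml.fv χ, v ∈ S := fun χ hχ v hv =>
      Or.inl (Or.inr (Or.inl (Set.mem_biUnion (Finset.mem_coe.2 (Finset.mem_union_left _ hχ)) hv)))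
    have hSΔ : ∀ χ ∈ Δ, ∀ v ∈ Fml.fv χ, v ∈ S := fun χ hχ v hv =>
      Or.inl (Or.inr (Or.inl (Set.mem_biUnion (Finset.mem_coe.2 (Finset.mem_union_right _ hχ)) hv)))
    have hSφ : ∀ v ∈ Fml.fv φ, v ∈ S := fun v hv => Or.inl (Or.inr (Or.inr (Or.inl hv)))
    have hSψ : ∀ v ∈ Fml.fv ψ, v ∈ S := fun v hv => Or.inl (Or.inr (Or.inr (Or.inr hv)))
    have hST : ∀ z ∈ ρ.evars, ∀ v : ℕ, ν z = Tm.var v → v ∈ S := fun z hz v hvz =>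
      Or.inr ⟨z, hz, hvz⟩
    set ν₂ : ℕ → Tm := fun z => if z ∈ ρ.evars then Tm.var (N + 1 + z) else σ z with hν₂
    set A : Set ℕ := {v | ∃ χ0 ∈ bodyImg ρ σ, v ∈ Fml.fv χ0} with hAdef
    -- analysis of free variables of instantiated head atoms
    have hheadfv : ∀ χ ∈ headImg ρ ν₂, ∀ v ∈ Fml.fv χ,
        v ∈ A ∨ ∃ z ∈ ρ.evars, v = N + 1 + z := by
      intro χ hχ v hv
      obtain ⟨a, ha, rfl⟩ := Finset.mem_image.1 hχ
      have hv' : Tm.var v ∈ a.args.map (Tm.app ν₂) := hv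
      obtain ⟨t, ht, hteq⟩ := List.mem_map.1 hv'
      cases t with
      | const c => simp [Tm.app] at hteq
      | var w =>
        simp only [Tm.app] at hteq
        by_cases hw : w ∈ ρ.evars
        · right
          refine ⟨w, hw, ?_⟩
          rw [hν₂] at hteq
          simp only [hw, if_pos] at hteq
          cases hteq; rfl
        · left
          obtain ⟨b, hb, hwb⟩ := ρ.head_frontier a ha w ht hw
          refine ⟨(Atom.subst σ b).toFml, Finset.mem_image.2 ⟨b, hb, rfl⟩, ?_⟩
          show Tm.var v ∈ b.args.map (Tm.app σ)
          refine List.mem_map.2 ⟨Tm.var w, hwb, ?_⟩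
          show Tm.app σ (Tm.var w) = Tm.var v
          rw [hν₂] at hteq
          simpa [Tm.app, hw] using hteq
    -- protected variables occur in atoms of Γ
    have hA : ∀ v ∈ A, ∃ p ts, Fml.atom p ts ∈ Γ ∧ Tm.var v ∈ ts := by
      rintro v ⟨χ0, hχ0, hv⟩
      obtain ⟨b, hb, rfl⟩ := Finset.mem_image.1 hχ0
      exact ⟨b.pred, b.args.map (Tm.app σ), h4 (Finset.mem_image.2 ⟨b, hb, rfl⟩), hv⟩
    have hW : ∀ χ ∈ headImg ρ ν₂, ∀ v ∈ Fml.fv χ, v ∈ A ∨ v ∉ V := by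
      intro χ hχ v hv
      rcases hheadfv χ hχ v hv with hvA | ⟨z, hz, rfl⟩
      · exact Or.inl hvA
      · exact Or.inr fun hvV => hfresh z (hSV hvV)
    set Γ'' : Finset Fml := Γ ∪ headImg ρ ν₂ with hΓ''
    -- the weakened derivations
    have d2' : G3P R Γ'' (insert ψ Δ) :=
      (G3B.weak (headImg ρ ν₂) A hW (b2.mono Finset.subset_union_right) hA).toP
    have hA' : ∀ v ∈ A, ∃ p ts, Fml.atom p ts ∈ Γ' ∧ Tm.var v ∈ ts := by
      intro v hv
      obtain ⟨p, ts, hmem, hts⟩ := hA v hv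
      exact ⟨p, ts, by rw [h5]; exact Finset.mem_union_left _ hmem, hts⟩
    have d1pre : G3P R (Γ'' ∪ headImg ρ ν) (insert φ Δ) := by
      have := (G3B.weak (headImg ρ ν₂) A hW (b1.mono Finset.subset_union_left) hA').toP
      rw [hΓ'', Finset.union_right_comm, ← h5]
      exact this
    have d1' : G3P R Γ'' (insert φ Δ) := by
      refine G3P.er ⟨ρ, hρ, σ, ν, h1, ?_, h3, h4.trans Finset.subset_union_left, rfl⟩ d1pre
      intro z hz
      obtain ⟨v, hvz, hG, hD⟩ := h2 z hz
      refine ⟨v, hvz, fun χ hχ => ?_, hD⟩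
      rcases Finset.mem_union.1 hχ with hc | hc
      · exact hG χ hc
      · intro hfv
        rcases hheadfv χ hc v hfv with hvA | ⟨z', hz', hveq⟩
        · obtain ⟨p, ts, hmem, hts⟩ := hA v hvA
          exact hG (Fml.atom p ts) hmem hts
        · exact hfresh z' (hveq ▸ hST z hz v hvz)
    refine ⟨Γ'', ⟨σ, ν₂, ?_, ?_, ?_, h4, rfl⟩, d1', d2'⟩
    · intro x hx
      rw [hν₂]; simp [hx]
    · intro z hz
      refine ⟨N + 1 + z, by rw [hν₂]; simp [hz], fun χ hχ hfv => ?_, fun χ hχ hfv => ?_⟩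
      · exact hfresh z (hSΓ χ hχ _ hfv)
      · rcases Finset.mem_insert.1 hχ with rfl | hc
        · rcases hfv with hfv | hfv
          · exact hfresh z (hSφ _ hfv)
          · exact hfresh z (hSψ _ hfv)
        · exact hfresh z (hSΔ χ hc _ hfv)
    · intro z hz z' hz' heq
      rw [hν₂] at heq
      simp only [hz, hz', if_pos] at heq
      have := Tm.var.inj heq; omega
  · intro Γ' Γ Δ x φ t hER d
    obtain ⟨σ, ν, h1, h2, h3, h4, h5⟩ := hER
    refine ⟨Γ', ⟨σ, ν, h1, ?_, h3, h4, h5⟩, d⟩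
    intro z hz
    obtain ⟨v, hvz, hG, hD⟩ := h2 z hz
    refine ⟨v, hvz, hG, fun χ hχ => hD χ ?_⟩
    rcases Finset.mem_insert.1 hχ with rfl | hc
    · exact Finset.mem_insert_self _ _
    · exact Finset.mem_insert_of_mem (Finset.mem_insert_of_mem hc)
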